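/- Let G be a finitely generated free group or monoid acting continuously on a compact metric space X. For every x ∈ X and every w ∈ W_∞, the limit set ω_w(x) is internally chain transitive. -/

import Mathlib

/-- Reduced words over the alphabet `S` of generators and inverses (`ι` = formal inverse). -/
def Reduced {S : Type*} (ι : S → S) (l : List S) : Prop :=
  l.Chain' (fun a b => b ≠ ι a)

/-- The action of a word `l` on `x`: `f_{uv} = f_v ∘ f_u`. -/
def act {S X : Type*} (f : S → X → X) (l : List S) (x : X) : X :=
  l.foldl (fun y s => f s y) x

/-- The prefix `w_0 w_1 ⋯ w_k` of an infinite word `w`. -/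
def prefixWord {S : Type*} (w : ℕ → S) (k : ℕ) : List S :=
  (List.range (k + 1)).map w

/-- `ω_w(x) = ⋂ₙ cl { f_{w_0⋯w_k}(x) : k > n }`. -/
def omegaW {S X : Type*} [MetricSpace X] (f : S → X → X) (w : ℕ → S) (x : X) : Set X :=
  ⋂ n : ℕ, closure {y | ∃ k : ℕ, n < k ∧ y = act f (prefixWord w k) x}

/-- An `ε`-chain in `Y` indexed by the word `u`. -/
def ChainIn {S X : Type*} [MetricSpace X] (f : S → X → X) (Y : Set X) (ε : ℝ)
    (u : List S) (c : ℕ → X) : Prop :=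
  (∀ i ≤ u.length, c i ∈ Y) ∧
  ∀ i, ∀ h : i < u.length, dist (f (u.get ⟨i, h⟩) (c i)) (c (i + 1)) < ε

/-- Internal chain transitivity. -/
def ICT {S X : Type*} [MetricSpace X] (ι : S → S) (f : S → X → X) (Y : Set X) : Prop :=
  ∀ x ∈ Y, ∀ y ∈ Y, ∀ ε > (0 : ℝ), ∃ u : List S, Reduced ι u ∧
    ∃ c : ℕ → X, ChainIn f Y ε u c ∧ c 0 = x ∧ c u.length = y

/-- every `ω_w`-limit set is internally chain transitive. -/
theorem omegaW_ICT {S X : Type*} [Fintype S]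
    [MetricSpace X] [CompactSpace X]
    (ι : S → S) (hι : ∀ s, ι (ι s) = s) (hιne : ∀ s, ι s ≠ s)
    (f : S → X → X) (hcont : ∀ s, Continuous (f s))
    (hinv : ∀ s y, f (ι s) (f s y) = y)
    (w : ℕ → S) (hw : ∀ n, w (n + 1) ≠ ι (w n)) (x : X) :
    ICT ι f (omegaW f w x) := by
  classical
  intro y hy z hz ε hε
  set a : ℕ → X := fun k => act f (prefixWord w k) x with ha
  have hstep : ∀ k, a (k + 1) = f (w (k + 1)) (a k) := by
    intro k
    have hpre : prefixWord w (k + 1) = prefixWord w k ++ [w (k + 1)] := by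
      simp [prefixWord, List.range_succ]
    show act f (prefixWord w (k + 1)) x = f (w (k + 1)) (act f (prefixWord w k) x)
    rw [hpre]
    simp [act, List.foldl_append]
  set Y := omegaW f w x with hYdef
  have hmemY : ∀ p, p ∈ Y ↔ ∀ n, p ∈ closure {v | ∃ k, n < k ∧ v = a k} := by
    intro p
    simp only [hYdef, omegaW, Set.mem_iInter]
    exact Iff.rfl
  -- uniform continuity, uniformly in `s`
  have hUC : ∀ ε' > (0:ℝ), ∃ δ > 0, ∀ s : S, ∀ p q : X,
      dist p q < δ → dist (f s p) (f s q) < ε' := by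
    intro ε' hε'
    have h1 : ∀ s : S, ∃ δ > 0, ∀ p q : X, dist p q < δ → dist (f s p) (f s q) < ε' := by
      intro s
      have := CompactSpace.uniformContinuous_of_continuous (hcont s)
      exact Metric.uniformContinuous_iff.mp this ε' hε'
    choose δf hδf hδf2 using h1
    have hne : (Finset.univ : Finset S).Nonempty := ⟨w 0, Finset.mem_univ _⟩
    refine ⟨Finset.univ.inf' hne δf, ?_, ?_⟩
    · exact (Finset.lt_inf'_iff hne).mpr fun s _ => hδf s
    · intro s p q h
      exact hδf2 s p q (lt_of_lt_of_le h (Finset.inf'_le _ (Finset.mem_univ s)))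
  -- attraction: the orbit tail is eventually δ-close to Y
  have hattr : ∀ δ > (0:ℝ), ∃ N, ∀ k > N, ∃ q ∈ Y, dist (a k) q < δ := by
    intro δ hδ
    by_contra hcon
    push_neg at hcon
    set U : Set X := ⋃ q ∈ Y, Metric.ball q δ with hU
    have hUopen : IsOpen U := isOpen_biUnion fun _ _ => Metric.isOpen_ball
    set K : ℕ → Set X := fun n => closure {v | ∃ k, n < k ∧ v = a k} ∩ Uᶜ with hK
    have hKcl : ∀ n, IsClosed (K n) := fun n =>
      (isClosed_closure).inter hUopen.isClosed_compl
    have hKcp : ∀ n, IsCompact (K n) := fun n => (hKcl n).isCompact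
    have hKne : ∀ n, (K n).Nonempty := by
      intro n
      obtain ⟨k, hk, hk2⟩ := hcon n
      refine ⟨a k, subset_closure ⟨k, hk, rfl⟩, ?_⟩
      intro hmem
      simp only [hU, Set.mem_iUnion, Metric.mem_ball] at hmem
      obtain ⟨q, hq, hdq⟩ := hmem
      exact absurd hdq (not_lt.mpr (hk2 q hq))
    have hKanti : ∀ {n m : ℕ}, n ≤ m → K m ⊆ K n := by
      intro n m hnm
      refine Set.inter_subset_inter ?_ le_rfl
      apply closure_mono
      rintro v ⟨k, hk, rfl⟩
      exact ⟨k, lt_of_le_of_lt hnm hk, rfl⟩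
    have hdir : Directed (· ⊇ ·) K := fun n m =>
      ⟨max n m, hKanti (le_max_left n m), hKanti (le_max_right n m)⟩
    obtain ⟨p, hp⟩ :=
      IsCompact.nonempty_iInter_of_directed_nonempty_isCompact_isClosed K hdir hKne hKcp hKcl
    simp only [Set.mem_iInter, hK, Set.mem_inter_iff] at hp
    have hpY : p ∈ Y := (hmemY p).mpr fun n => (hp n).1
    have hpU : p ∈ U := by
      simp only [hU, Set.mem_iUnion, Metric.mem_ball]
      exact ⟨p, hpY, by simpa using hδ⟩
    exact (hp 0).2 hpU
  -- set up constants
  have hε3 : (0:ℝ) < ε / 3 := by linarith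
  obtain ⟨δ0, hδ0, hδ0'⟩ := hUC (ε / 3) hε3
  set δ : ℝ := min δ0 (ε / 3) with hδdef
  have hδ : 0 < δ := lt_min hδ0 hε3
  have hδle1 : δ ≤ δ0 := min_le_left _ _
  have hδle2 : δ ≤ ε / 3 := min_le_right _ _
  obtain ⟨N, hN⟩ := hattr δ hδ
  -- pick near-returns to y and z
  have hy' : y ∈ closure {v | ∃ k, N < k ∧ v = a k} := (hmemY y).mp hy N
  obtain ⟨b1, hb1, hdb1⟩ := Metric.mem_closure_iff.mp hy' δ hδ
  obtain ⟨k1, hk1N, rfl⟩ := hb1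
  have hz' : z ∈ closure {v | ∃ k, k1 < k ∧ v = a k} := (hmemY z).mp hz k1
  obtain ⟨b2, hb2, hdb2⟩ := Metric.mem_closure_iff.mp hz' δ hδ
  obtain ⟨k2, hk2, rfl⟩ := hb2
  set m : ℕ := k2 - k1 with hm
  have hmpos : 0 < m := Nat.sub_pos_of_lt hk2
  have hk1m : k1 + m = k2 := Nat.add_sub_cancel' (le_of_lt hk2)
  -- choose shadow points in Y
  have hN' : ∀ k, ∃ q, k > N → q ∈ Y ∧ dist (a k) q < δ := by
    intro k
    by_cases h : k > N
    · obtain ⟨q, hq, hd⟩ := hN k h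
      exact ⟨q, fun _ => ⟨hq, hd⟩⟩
    · exact ⟨y, fun h' => absurd h' h⟩
  choose P hP using hN'
  -- the word and the chain
  set u : List S := (List.range m).map (fun i => w (k1 + 1 + i)) with hu
  have hulen : u.length = m := by simp [hu]
  set c : ℕ → X := fun i => if i = 0 then y else if m ≤ i then z else P (k1 + i) with hc
  have hcY : ∀ i ≤ m, c i ∈ Y := by
    intro i hi
    by_cases h0 : i = 0
    · simpa [hc, h0] using hy
    · by_cases hm' : m ≤ i
      · simpa [hc, h0, hm'] using hz
      · have hgt : k1 + i > N := lt_of_lt_of_le hk1N (Nat.le_add_right k1 i)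
        simpa [hc, h0, hm'] using (hP (k1 + i) hgt).1
  have hcclose : ∀ i < m, dist (c i) (a (k1 + i)) < δ := by
    intro i hi
    by_cases h0 : i = 0
    · subst h0; simpa [hc] using hdb1
    · have hm' : ¬ m ≤ i := not_le.mpr hi
      have hgt : k1 + i > N := lt_of_lt_of_le hk1N (Nat.le_add_right k1 i)
      have := (hP (k1 + i) hgt).2
      simpa [hc, h0, hm', dist_comm] using this
  have hcclose' : ∀ i < m, dist (a (k1 + i + 1)) (c (i + 1)) < δ := by
    intro i hi
    by_cases hm' : m ≤ i + 1
    · have : i + 1 = m := le_antisymm hi hm'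
      have hc1 : c (i + 1) = z := by simp [hc, hm']
      rw [hc1, show k1 + i + 1 = k2 from by omega]
      simpa [dist_comm] using hdb2
    · have hgt : k1 + i + 1 > N := lt_of_lt_of_le hk1N (by omega)
      have hne0 : i + 1 ≠ 0 := Nat.succ_ne_zero i
      have := (hP (k1 + i + 1) hgt).2
      have hc1 : c (i + 1) = P (k1 + (i + 1)) := by simp [hc, hne0, hm']
      rw [hc1, show k1 + (i + 1) = k1 + i + 1 from by ring]
      exact this
  refine ⟨u, ?_, c, ⟨?_, ?_⟩, ?_, ?_⟩
  · -- Reduced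
    rw [Reduced, hu, List.Chain', List.isChain_map]
    rcases Nat.exists_eq_add_of_lt hmpos with ⟨m', hm'⟩
    rw [show m = m' + 1 from by omega]
    rw [List.isChain_range_succ]
    intro i _
    have := hw (k1 + 1 + i)
    simpa [show k1 + 1 + (i + 1) = k1 + 1 + i + 1 from by ring] using this
  · -- membership
    intro i hi
    exact hcY i (by rwa [hulen] at hi)
  · -- chain estimate
    intro i hilen
    have hi : i < m := by rwa [hulen] at hilen
    have hget : u.get ⟨i, hilen⟩ = w (k1 + 1 + i) := by
      simp [hu]
    rw [hget]
    have h1 : dist (f (w (k1 + 1 + i)) (c i)) (a (k1 + i + 1)) < ε / 3 := by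
      have := hδ0' (w (k1 + 1 + i)) (c i) (a (k1 + i)) (lt_of_lt_of_le (hcclose i hi) hδle1)
      have heq : f (w (k1 + 1 + i)) (a (k1 + i)) = a (k1 + i + 1) := by
        rw [show k1 + 1 + i = k1 + i + 1 from by ring]
        exact (hstep (k1 + i)).symm
      rwa [heq] at this
    have h2 := hcclose' i hi
    calc dist (f (w (k1 + 1 + i)) (c i)) (c (i + 1))
        ≤ dist (f (w (k1 + 1 + i)) (c i)) (a (k1 + i + 1)) + dist (a (k1 + i + 1)) (c (i + 1)) :=
          dist_triangle _ _ _
      _ < ε / 3 + δ := add_lt_add h1 h2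
      _ ≤ ε / 3 + ε / 3 := by linarith
      _ < ε := by linarith
  · simp [hc]
  · rw [hulen]
    have hne : m ≠ 0 := by omega
    simp [hc, hne]
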